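/- Let P ∈ M_2(ℍ) have substantial right eigenvalues λ₁ ≠ λ₂ (complex numbers, each real or with positive imaginary part). Then P is diagonalizable: P is similar over ℍ to the diagonal matrix diag(λ₁, λ₂). -/

import Mathlib

noncomputable section
open Matrix Polynomial

abbrev Hq := Quaternion ℝ

def toH (z : ℂ) : Hq := ⟨z.re, z.im, 0, 0⟩

def toC1 (q : Hq) : ℂ := ⟨q.re, q.imI⟩
def toC2 (q : Hq) : ℂ := ⟨q.imJ, q.imK⟩

def chi {m : ℕ} (P : Matrix (Fin m) (Fin m) Hq) :
    Matrix (Fin m ⊕ Fin m) (Fin m ⊕ Fin m) ℂ :=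
  Matrix.fromBlocks (P.map toC1) (P.map toC2)
    (-(P.map fun q => star (toC2 q))) (P.map fun q => star (toC1 q))

def jq : Hq := ⟨0, 0, 1, 0⟩

@[simp] lemma toH_re (z : ℂ) : (toH z).re = z.re := rfl
@[simp] lemma toH_imI (z : ℂ) : (toH z).imI = z.im := rfl
@[simp] lemma toH_imJ (z : ℂ) : (toH z).imJ = 0 := rfl
@[simp] lemma toH_imK (z : ℂ) : (toH z).imK = 0 := rfl
@[simp] lemma jq_re : jq.re = 0 := rfl
@[simp] lemma jq_imI : jq.imI = 0 := rfl
@[simp] lemma jq_imJ : jq.imJ = 1 := rfl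
@[simp] lemma jq_imK : jq.imK = 0 := rfl

def mkH (a b c d : ℝ) : Hq := ⟨a, b, c, d⟩
@[simp] lemma mkH_re (a b c d : ℝ) : (mkH a b c d).re = a := rfl
@[simp] lemma mkH_imI (a b c d : ℝ) : (mkH a b c d).imI = b := rfl
@[simp] lemma mkH_imJ (a b c d : ℝ) : (mkH a b c d).imJ = c := rfl
@[simp] lemma mkH_imK (a b c d : ℝ) : (mkH a b c d).imK = d := rfl

attribute [local simp] Quaternion.re_zero Quaternion.imI_zero Quaternion.imJ_zero Quaternion.imK_zero
attribute [local simp] Quaternion.re_one Quaternion.imI_one Quaternion.imJ_one Quaternion.imK_one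

lemma mul_decomp (a b c d : ℂ) :
    (toH a + toH b * jq) * (toH c + toH d * jq) =
      toH (a * c - b * (starRingEnd ℂ) d) + toH (a * d + b * (starRingEnd ℂ) c) * jq := by
  ext <;> simp [Quaternion.re_mul, Quaternion.imI_mul, Quaternion.imJ_mul,
    Quaternion.imK_mul] <;> ring

lemma decomp (p : Hq) : p = toH (toC1 p) + toH (toC2 p) * jq := by
  ext <;> simp [toC1, toC2, Quaternion.re_mul, Quaternion.imI_mul,
    Quaternion.imJ_mul, Quaternion.imK_mul]

lemma toH_eq_iff {a b : ℂ} : toH a = toH b ↔ a = b := by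
  constructor
  · intro h; have := congrArg QuaternionAlgebra.re h; have := congrArg QuaternionAlgebra.imI h
    simp [toH] at *; exact Complex.ext ‹_› ‹_›
  · rintro rfl; rfl

lemma toC1_mul (p q : Hq) :
    toC1 (p * q) = toC1 p * toC1 q - toC2 p * (starRingEnd ℂ) (toC2 q) := by
  apply Complex.ext <;> simp [toC1, toC2, Quaternion.re_mul, Quaternion.imI_mul] <;> ring

lemma toC2_mul (p q : Hq) :
    toC2 (p * q) = toC1 p * toC2 q + toC2 p * (starRingEnd ℂ) (toC1 q) := by
  apply Complex.ext <;> simp [toC1, toC2, Quaternion.imJ_mul, Quaternion.imK_mul] <;> ring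

def C1hom : Hq →+ ℂ where
  toFun := toC1
  map_zero' := by apply Complex.ext <;> simp [toC1]
  map_add' p q := by apply Complex.ext <;> simp [toC1]

def C2hom : Hq →+ ℂ where
  toFun := toC2
  map_zero' := by apply Complex.ext <;> simp [toC2]
  map_add' p q := by apply Complex.ext <;> simp [toC2]

lemma chi_mul {m : ℕ} (M N : Matrix (Fin m) (Fin m) Hq) :
    chi (M * N) = chi M * chi N := by
  have hc1 : ∀ (f : Fin m → Hq), toC1 (∑ k, f k) = ∑ k, toC1 (f k) := fun f => map_sum C1hom f _
  have hc2 : ∀ (f : Fin m → Hq), toC2 (∑ k, f k) = ∑ k, toC2 (f k) := fun f => map_sum C2hom f _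
  ext (i | i) (j | j) <;>
    simp only [chi, fromBlocks_apply₁₁, fromBlocks_apply₁₂, fromBlocks_apply₂₁,
      fromBlocks_apply₂₂, Matrix.map_apply, Matrix.mul_apply, Matrix.neg_apply,
      Fintype.sum_sum_type, hc1, hc2, toC1_mul, toC2_mul]
  · rw [← Finset.sum_add_distrib]
    refine Finset.sum_congr rfl fun k _ => ?_
    simp only [starRingEnd_apply]; try ring
  · rw [← Finset.sum_add_distrib]
    refine Finset.sum_congr rfl fun k _ => ?_
    simp only [starRingEnd_apply]; try ring
  · rw [star_sum, neg_eq_iff_eq_neg, ← Finset.sum_add_distrib, ← Finset.sum_neg_distrib]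
    refine Finset.sum_congr rfl fun k _ => ?_
    simp only [starRingEnd_apply, star_add, star_mul', star_star]; try ring
  · rw [star_sum, ← Finset.sum_add_distrib]
    refine Finset.sum_congr rfl fun k _ => ?_
    simp only [starRingEnd_apply, star_sub, star_mul', star_star]; try ring

lemma chi_one {m : ℕ} : chi (1 : Matrix (Fin m) (Fin m) Hq) = 1 := by
  ext (i | i) (j | j) <;>
    simp [chi, Matrix.one_apply, toC1, toC2, apply_ite, Complex.ext_iff] <;> split_ifs <;> simp

lemma charpoly_conj' {n : Type*} [Fintype n] [DecidableEq n]
    (U N R : Matrix n n ℂ) (hUR : U * R = 1) (hRU : R * U = 1) :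
    (U * N * R).charpoly = N.charpoly := by
  have hUR' : U.map C * R.map C = 1 := by
    rw [← RingHom.mapMatrix_apply, ← RingHom.mapMatrix_apply, ← _root_.map_mul, hUR]; simp
  have hRU' : R.map C * U.map C = 1 := by
    rw [← RingHom.mapMatrix_apply, ← RingHom.mapMatrix_apply, ← _root_.map_mul, hRU]; simp
  have hmat : charmatrix (U * N * R) = U.map C * charmatrix N * R.map C := by
    rw [charmatrix, charmatrix, Matrix.mul_sub, Matrix.sub_mul]
    congr 1
    · rw [mul_assoc, (Matrix.scalar_commute (X : ℂ[X]) (fun r => Commute.all _ _)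
        (R.map C)).eq, ← mul_assoc, hUR', one_mul]
    · simp [Matrix.map_mul]
  rw [Matrix.charpoly, hmat, Matrix.det_mul, Matrix.det_mul, Matrix.charpoly]
  have : (U.map C).det * (R.map C).det = 1 := by rw [← Matrix.det_mul, hUR', Matrix.det_one]
  calc (U.map C).det * (charmatrix N).det * (R.map C).det
      = (U.map C).det * (R.map C).det * (charmatrix N).det := by ring
    _ = (charmatrix N).det := by rw [this, one_mul]

lemma eval_charpoly' {n : Type*} [Fintype n] [DecidableEq n] (M : Matrix n n ℂ) (t : ℂ) :
    M.charpoly.eval t = (t • (1 : Matrix n n ℂ) - M).det := by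
  rw [Matrix.charpoly, ← Polynomial.coe_evalRingHom, RingHom.map_det]
  congr 1
  ext i j
  by_cases h : i = j <;>
    simp [h, charmatrix_apply_eq, charmatrix_apply_ne, Matrix.one_apply, Matrix.sub_apply,
      Matrix.smul_apply]

lemma exists_eigen {n : Type*} [Fintype n] [DecidableEq n] (M : Matrix n n ℂ) (t : ℂ)
    (h : M.charpoly.eval t = 0) : ∃ w : n → ℂ, w ≠ 0 ∧ M *ᵥ w = t • w := by
  rw [eval_charpoly'] at h
  obtain ⟨w, hw, hmw⟩ := (Matrix.exists_mulVec_eq_zero_iff).2 h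
  refine ⟨w, hw, ?_⟩
  rw [Matrix.sub_mulVec, Matrix.smul_mulVec, Matrix.one_mulVec, sub_eq_zero] at hmw
  exact hmw.symm

def chiq (p : Hq) : Matrix (Fin 2) (Fin 2) ℂ :=
  !![toC1 p, toC2 p; -((starRingEnd ℂ) (toC2 p)), (starRingEnd ℂ) (toC1 p)]

def σf : (Fin 2 ⊕ Fin 2) → (Fin 2 ⊕ Fin 2) :=
  Sum.elim (![Sum.inl 0, Sum.inr 0]) (![Sum.inl 1, Sum.inr 1])

def σe : (Fin 2 ⊕ Fin 2) ≃ (Fin 2 ⊕ Fin 2) where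
  toFun := σf
  invFun := σf
  left_inv := by decide
  right_inv := by decide

lemma reindex_chi (T : Matrix (Fin 2) (Fin 2) Hq) :
    reindex σe σe (chi T) =
      fromBlocks (chiq (T 0 0)) (chiq (T 0 1)) (chiq (T 1 0)) (chiq (T 1 1)) := by
  ext (a | a) (b | b) <;> fin_cases a <;> fin_cases b <;>
    simp [σe, σf, chi, chiq, Matrix.reindex_apply, Matrix.submatrix_apply]

lemma chiq_zero : chiq (0 : Hq) = 0 := by
  ext i j
  fin_cases i <;> fin_cases j <;> simp [chiq, toC1, toC2, Complex.ext_iff]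

lemma charpoly_chiq (p : Hq) : (chiq p).charpoly =
    (X - C (toC1 p)) * (X - C ((starRingEnd ℂ) (toC1 p))) +
      C (toC2 p * (starRingEnd ℂ) (toC2 p)) := by
  rw [Matrix.charpoly, Matrix.det_fin_two]
  simp [charmatrix_apply_eq, charmatrix_apply_ne, chiq]
  try ring

lemma charpoly_chi_triangular (T : Matrix (Fin 2) (Fin 2) Hq) (h10 : T 1 0 = 0) :
    (chi T).charpoly = (chiq (T 0 0)).charpoly * (chiq (T 1 1)).charpoly := by
  rw [← Matrix.charpoly_reindex σe, reindex_chi, h10, chiq_zero,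
    Matrix.charpoly_fromBlocks_zero₂₁]

lemma toH_zero : toH 0 = 0 := by ext <;> simp

lemma toH_add (a b : ℂ) : toH (a + b) = toH a + toH b := by ext <;> simp

lemma toC1_toH (z : ℂ) : toC1 (toH z) = z := by apply Complex.ext <;> simp [toC1, toH]

lemma toC2_toH (z : ℂ) : toC2 (toH z) = 0 := by apply Complex.ext <;> simp [toC2, toH]

lemma charpoly_chiq_toH (l : ℂ) :
    (chiq (toH l)).charpoly = (X - C l) * (X - C ((starRingEnd ℂ) l)) := by
  rw [charpoly_chiq, toC1_toH, toC2_toH]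
  simp

lemma quad_coeffs {a b a' b' : ℂ}
    (h : X ^ 2 - C a * X + C b = X ^ 2 - C a' * X + C b') : a = a' ∧ b = b' := by
  constructor
  · have h1 := congrArg (fun p => Polynomial.coeff p 1) h
    simpa [coeff_X_pow, Polynomial.coeff_C, neg_eq_iff_eq_neg] using h1
  · have h0 := congrArg (fun p => Polynomial.coeff p 0) h
    simpa [coeff_X_pow, Polynomial.coeff_C] using h0

lemma coeffs_of_prod_eq {α β l2 : ℂ}
    (h : (X - C α) * (X - C ((starRingEnd ℂ) α)) + C (β * (starRingEnd ℂ) β) =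
      (X - C l2) * (X - C ((starRingEnd ℂ) l2))) :
    α + (starRingEnd ℂ) α = l2 + (starRingEnd ℂ) l2 ∧
      α * (starRingEnd ℂ) α + β * (starRingEnd ℂ) β = l2 * (starRingEnd ℂ) l2 := by
  apply quad_coeffs
  have hh : X ^ 2 - C (α + (starRingEnd ℂ) α) * X + C (α * (starRingEnd ℂ) α +
      β * (starRingEnd ℂ) β) =
      X ^ 2 - C (l2 + (starRingEnd ℂ) l2) * X + C (l2 * (starRingEnd ℂ) l2) := by
    simp only [_root_.map_add, _root_.map_mul] at h ⊢
    linear_combination h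
  exact hh

lemma conj_exists (c : Hq) (l : ℂ) (hs : 0 ≤ l.im) (hre : c.re = l.re)
    (him : c.imI ^ 2 + c.imJ ^ 2 + c.imK ^ 2 = l.im ^ 2) :
    ∃ q : Hq, q ≠ 0 ∧ c * q = q * toH l := by
  by_cases hA : c.imI = -l.im ∧ c.imJ = 0 ∧ c.imK = 0
  · refine ⟨jq, ?_, ?_⟩
    · intro h
      have := congrArg QuaternionAlgebra.imJ h
      simp [jq] at this
    · obtain ⟨hi, hj, hk⟩ := hA
      ext <;> simp [Quaternion.re_mul, Quaternion.imI_mul, Quaternion.imJ_mul,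
        Quaternion.imK_mul, hi, hj, hk, hre] <;> ring
  · refine ⟨mkH (l.im + c.imI) 0 (-c.imK) c.imJ, ?_, ?_⟩
    · intro h
      apply hA
      have h1 := congrArg QuaternionAlgebra.re h
      have h2 := congrArg QuaternionAlgebra.imJ h
      have h3 := congrArg QuaternionAlgebra.imK h
      simp at h1 h2 h3
      exact ⟨by linarith, h3, by linarith⟩
    · ext <;> simp [Quaternion.re_mul, Quaternion.imI_mul, Quaternion.imJ_mul,
        Quaternion.imK_mul, hre] <;> nlinarith [him]

lemma toH_mul_decomp (a c d : ℂ) :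
    toH a * (toH c + toH d * jq) = toH (a * c) + toH (a * d) * jq := by
  have h := mul_decomp a 0 c d
  simpa [toH_zero] using h

lemma decomp_mul_toH (a b c : ℂ) :
    (toH a + toH b * jq) * toH c = toH (a * c) + toH (b * (starRingEnd ℂ) c) * jq := by
  have h := mul_decomp a b c 0
  simpa [toH_zero] using h

lemma sylvester (l1 l2 : ℂ) (p : Hq) (hne : l2 ≠ l1) (hne' : (starRingEnd ℂ) l2 ≠ l1) :
    ∃ x : Hq, toH l1 * x + p = x * toH l2 := by
  set α := toC1 p / (l2 - l1) with hα
  set β := toC2 p / ((starRingEnd ℂ) l2 - l1) with hβ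
  refine ⟨toH α + toH β * jq, ?_⟩
  rw [toH_mul_decomp, decomp_mul_toH]
  have hp := decomp p
  rw [hp]
  have e1 : l1 * α + toC1 p = α * l2 := by
    rw [hα]; field_simp [sub_ne_zero.mpr hne]; ring
  have e2 : l1 * β + toC2 p = β * (starRingEnd ℂ) l2 := by
    rw [hβ]; field_simp [sub_ne_zero.mpr hne']; ring
  calc toH (l1 * α) + toH (l1 * β) * jq + (toH (toC1 p) + toH (toC2 p) * jq)
      = toH (l1 * α + toC1 p) + toH (l1 * β + toC2 p) * jq := by
        rw [toH_add, toH_add, add_mul]; abel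
    _ = toH (α * l2) + toH (β * (starRingEnd ℂ) l2) * jq := by rw [e1, e2]

lemma quat_eigen (P : Matrix (Fin 2) (Fin 2) Hq) (l1 : ℂ) (w : Fin 2 ⊕ Fin 2 → ℂ)
    (hw : w ≠ 0) (heig : (chi P) *ᵥ w = l1 • w) :
    ∃ v : Fin 2 → Hq, (v 0 ≠ 0 ∨ v 1 ≠ 0) ∧
      ∀ i, P i 0 * v 0 + P i 1 * v 1 = v i * toH l1 := by
  set x : Fin 2 → ℂ := fun i => w (Sum.inl i) with hx
  set y : Fin 2 → ℂ := fun i => w (Sum.inr i) with hy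
  set v : Fin 2 → Hq := fun i => toH (x i) + toH (-((starRingEnd ℂ) (y i))) * jq with hv
  have eq1 : ∀ i, toC1 (P i 0) * x 0 + toC2 (P i 0) * y 0 +
      (toC1 (P i 1) * x 1 + toC2 (P i 1) * y 1) = l1 * x i := by
    intro i
    have := congrFun heig (Sum.inl i)
    simp only [Matrix.mulVec, dotProduct, Fintype.sum_sum_type, Fin.sum_univ_two, chi,
      fromBlocks_apply₁₁, fromBlocks_apply₁₂, Matrix.map_apply, Pi.smul_apply,
      smul_eq_mul] at this
    linear_combination this
  have eq2 : ∀ i, -((starRingEnd ℂ) (toC2 (P i 0))) * x 0 + (starRingEnd ℂ) (toC1 (P i 0)) * y 0 +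
      (-((starRingEnd ℂ) (toC2 (P i 1))) * x 1 + (starRingEnd ℂ) (toC1 (P i 1)) * y 1) =
      l1 * y i := by
    intro i
    have := congrFun heig (Sum.inr i)
    simp only [Matrix.mulVec, dotProduct, Fintype.sum_sum_type, Fin.sum_univ_two, chi,
      fromBlocks_apply₂₁, fromBlocks_apply₂₂, Matrix.map_apply, Matrix.neg_apply, Pi.smul_apply,
      smul_eq_mul, starRingEnd_apply] at this ⊢
    linear_combination this
  refine ⟨v, ?_, ?_⟩
  · have hvz : ∀ i, v i = 0 → x i = 0 ∧ y i = 0 := by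
      intro i h
      have h1 := congrArg QuaternionAlgebra.re h
      have h2 := congrArg QuaternionAlgebra.imI h
      have h3 := congrArg QuaternionAlgebra.imJ h
      have h4 := congrArg QuaternionAlgebra.imK h
      simp [hv, Quaternion.re_mul, Quaternion.imI_mul, Quaternion.imJ_mul,
        Quaternion.imK_mul] at h1 h2 h3 h4
      constructor <;> simp [Complex.ext_iff, h1, h2, h3, h4]
    by_contra hcon
    push_neg at hcon
    obtain ⟨h0, h1'⟩ := hcon
    apply hw
    funext k
    have H0 := hvz 0 h0
    have H1 := hvz 1 h1'
    rcases k with i | i <;> fin_cases i <;>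
      simp only [Pi.zero_apply] <;>
      first
        | exact H0.1 | exact H1.1 | exact H0.2 | exact H1.2
  · intro i
    have hP0 := decomp (P i 0)
    have hP1 := decomp (P i 1)
    rw [hv]
    simp only
    rw [hP0, hP1, mul_decomp, mul_decomp, decomp_mul_toH]
    have cx : toC1 (P i 0) * x 0 - toC2 (P i 0) * (starRingEnd ℂ) (-((starRingEnd ℂ) (y 0))) +
        (toC1 (P i 1) * x 1 - toC2 (P i 1) * (starRingEnd ℂ) (-((starRingEnd ℂ) (y 1)))) =
        x i * l1 := by
      simp only [map_neg, Complex.conj_conj]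
      linear_combination eq1 i
    have cy : toC1 (P i 0) * -((starRingEnd ℂ) (y 0)) + toC2 (P i 0) * (starRingEnd ℂ) (x 0) +
        (toC1 (P i 1) * -((starRingEnd ℂ) (y 1)) + toC2 (P i 1) * (starRingEnd ℂ) (x 1)) =
        -((starRingEnd ℂ) (y i)) * (starRingEnd ℂ) l1 := by
      have := congrArg (starRingEnd ℂ) (eq2 i)
      simp only [_root_.map_add, _root_.map_mul, map_neg, Complex.conj_conj] at this
      linear_combination -this
    calc toH (toC1 (P i 0) * x 0 - toC2 (P i 0) * (starRingEnd ℂ) (-((starRingEnd ℂ) (y 0)))) +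
          toH (toC1 (P i 0) * -((starRingEnd ℂ) (y 0)) + toC2 (P i 0) * (starRingEnd ℂ) (x 0)) *
            jq +
          (toH (toC1 (P i 1) * x 1 - toC2 (P i 1) * (starRingEnd ℂ) (-((starRingEnd ℂ) (y 1)))) +
          toH (toC1 (P i 1) * -((starRingEnd ℂ) (y 1)) + toC2 (P i 1) * (starRingEnd ℂ) (x 1)) *
            jq)
        = toH (toC1 (P i 0) * x 0 - toC2 (P i 0) * (starRingEnd ℂ) (-((starRingEnd ℂ) (y 0))) +
            (toC1 (P i 1) * x 1 - toC2 (P i 1) * (starRingEnd ℂ) (-((starRingEnd ℂ) (y 1))))) +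
          toH (toC1 (P i 0) * -((starRingEnd ℂ) (y 0)) + toC2 (P i 0) * (starRingEnd ℂ) (x 0) +
            (toC1 (P i 1) * -((starRingEnd ℂ) (y 1)) + toC2 (P i 1) * (starRingEnd ℂ) (x 1))) *
            jq := by
          conv_rhs => rw [toH_add, toH_add, add_mul]
          abel
      _ = toH (x i * l1) + toH (-((starRingEnd ℂ) (y i)) * (starRingEnd ℂ) l1) * jq := by
          rw [cx, cy]

/-- A 2×2 quaternionic matrix whose substantial right eigenvalues are distinct is
diagonalizable, being similar over ℍ to diag(λ₁, λ₂). -/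
theorem diagonalizable_of_distinct_substantial (P : Matrix (Fin 2) (Fin 2) Hq)
    (l1 l2 : ℂ) (h1 : l1.im = 0 ∨ 0 < l1.im) (h2 : l2.im = 0 ∨ 0 < l2.im)
    (hne : l1 ≠ l2)
    (hchar : (chi P).charpoly =
      (X - C l1) * (X - C (starRingEnd ℂ l1)) * (X - C l2) * (X - C (starRingEnd ℂ l2))) :
    ∃ S T : Matrix (Fin 2) (Fin 2) Hq, S * T = 1 ∧ T * S = 1 ∧
      P = S * Matrix.diagonal ![toH l1, toH l2] * T := by
  have h1' : 0 ≤ l1.im := by rcases h1 with h | h <;> linarith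
  have h2' : 0 ≤ l2.im := by rcases h2 with h | h <;> linarith
  -- eigenvector of chi P
  have hroot : (chi P).charpoly.eval l1 = 0 := by rw [hchar]; simp
  obtain ⟨w, hw, heig⟩ := exists_eigen (chi P) l1 hroot
  obtain ⟨v, hv01, hPv⟩ := quat_eigen P l1 w hw heig
  -- basis extension
  have hS0 : ∃ S₀ R₀ : Matrix (Fin 2) (Fin 2) Hq,
      S₀ * R₀ = 1 ∧ R₀ * S₀ = 1 ∧ (∀ j, S₀ j 0 = v j) := by
    by_cases h0 : v 0 ≠ 0
    · refine ⟨!![v 0, 0; v 1, 1], !![(v 0)⁻¹, 0; -(v 1 * (v 0)⁻¹), 1], ?_, ?_, ?_⟩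
      · rw [Matrix.mul_fin_two, Matrix.one_fin_two]
        congr 1 <;> simp [mul_inv_cancel₀ h0] <;> ring
      · rw [Matrix.mul_fin_two, Matrix.one_fin_two]
        congr 1 <;> simp [mul_assoc, inv_mul_cancel₀ h0]
      · intro j; fin_cases j <;> simp
    · push_neg at h0
      have h1v : v 1 ≠ 0 := hv01.resolve_left (by simp [h0])
      refine ⟨!![0, 1; v 1, 0], !![0, (v 1)⁻¹; 1, 0], ?_, ?_, ?_⟩
      · rw [Matrix.mul_fin_two, Matrix.one_fin_two]
        congr 1 <;> simp [mul_inv_cancel₀ h1v]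
      · rw [Matrix.mul_fin_two, Matrix.one_fin_two]
        congr 1 <;> simp [inv_mul_cancel₀ h1v]
      · intro j; fin_cases j <;> simp [h0]
  obtain ⟨S₀, R₀, hSR, hRS, hcol⟩ := hS0
  set T := R₀ * P * S₀ with hTdef
  -- first column of T
  have hTcol : ∀ k, T k 0 = (if k = 0 then (1 : Hq) else 0) * toH l1 := by
    intro k
    have hPS : ∀ i, (P * S₀) i 0 = v i * toH l1 := by
      intro i
      rw [Matrix.mul_apply, Fin.sum_univ_two, hcol 0, hcol 1, hPv i]
    have : T k 0 = (R₀ * (P * S₀)) k 0 := by rw [hTdef, Matrix.mul_assoc]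
    rw [this, Matrix.mul_apply, Fin.sum_univ_two, hPS 0, hPS 1, ← mul_assoc, ← mul_assoc,
      ← add_mul]
    congr 1
    have : (R₀ * S₀) k 0 = R₀ k 0 * v 0 + R₀ k 1 * v 1 := by
      rw [Matrix.mul_apply, Fin.sum_univ_two, hcol 0, hcol 1]
    rw [← this, hRS, Matrix.one_apply]
  have hT00 : T 0 0 = toH l1 := by simpa using hTcol 0
  have hT10 : T 1 0 = 0 := by simpa using hTcol 1
  -- charpoly transfer
  have hcp : (chi T).charpoly = (chi P).charpoly := by
    have hTchi : chi T = chi R₀ * chi P * chi S₀ := by rw [hTdef, chi_mul, chi_mul]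
    rw [hTchi]
    exact charpoly_conj' _ _ _ (by rw [← chi_mul, hRS, chi_one]) (by rw [← chi_mul, hSR, chi_one])
  rw [charpoly_chi_triangular T hT10, hT00, charpoly_chiq_toH, hchar] at hcp
  have hmon : ((X - C l1) * (X - C ((starRingEnd ℂ) l1))) ≠ 0 :=
    ((monic_X_sub_C l1).mul (monic_X_sub_C _)).ne_zero
  have key : (chiq (T 1 1)).charpoly = (X - C l2) * (X - C ((starRingEnd ℂ) l2)) := by
    apply mul_left_cancel₀ hmon
    linear_combination hcp
  obtain ⟨hsum, hprod⟩ := coeffs_of_prod_eq ((charpoly_chiq (T 1 1)).symm.trans key)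
  set c := T 1 1 with hcdef
  have hre : c.re = l2.re := by
    have := congrArg Complex.re hsum
    simp [toC1, Complex.add_re, Complex.conj_re] at this
    linarith
  have hnorm : c.imI ^ 2 + c.imJ ^ 2 + c.imK ^ 2 = l2.im ^ 2 := by
    have := congrArg Complex.re hprod
    simp [toC1, toC2, Complex.mul_re, Complex.conj_re, Complex.conj_im] at this
    have hrr : c.re * c.re = l2.re * l2.re := by rw [hre]
    linear_combination this - hrr
  obtain ⟨q, hq0, hqc⟩ := conj_exists c l2 h2' hre hnorm
  -- Sylvester
  have hne2 : l2 ≠ l1 := hne.symm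
  have hne2' : (starRingEnd ℂ) l2 ≠ l1 := by
    intro heq
    have him := congrArg Complex.im heq
    simp [Complex.conj_im] at him
    have hl2im : l2.im = 0 := by linarith
    have : l2 = l1 := by
      rw [← heq, Complex.ext_iff]
      simp [Complex.conj_re, Complex.conj_im, hl2im]
    exact hne2 this
  obtain ⟨x, hx⟩ := sylvester l1 l2 (T 0 1 * q) hne2 hne2'
  -- assembly
  set D : Matrix (Fin 2) (Fin 2) Hq := !![1, 0; 0, q] with hDdef
  set D' : Matrix (Fin 2) (Fin 2) Hq := !![1, 0; 0, q⁻¹] with hD'def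
  set U : Matrix (Fin 2) (Fin 2) Hq := !![1, x; 0, 1] with hUdef
  set U' : Matrix (Fin 2) (Fin 2) Hq := !![1, -x; 0, 1] with hU'def
  have hDD' : D * D' = 1 := by
    rw [hDdef, hD'def, Matrix.mul_fin_two, Matrix.one_fin_two]
    congr 1 <;> simp [mul_inv_cancel₀ hq0]
  have hD'D : D' * D = 1 := by
    rw [hDdef, hD'def, Matrix.mul_fin_two, Matrix.one_fin_two]
    congr 1 <;> simp [inv_mul_cancel₀ hq0]
  have hUU' : U * U' = 1 := by
    rw [hUdef, hU'def, Matrix.mul_fin_two, Matrix.one_fin_two]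
    congr 1 <;> simp
  have hU'U : U' * U = 1 := by
    rw [hUdef, hU'def, Matrix.mul_fin_two, Matrix.one_fin_two]
    congr 1 <;> simp
  -- triangular to diagonal
  have hTeta : T = !![toH l1, T 0 1; 0, c] := by
    conv_lhs => rw [Matrix.eta_fin_two T]
    rw [hT00, hT10]
  have hT3 : U' * (D' * T * D) * U = !![toH l1, 0; 0, toH l2] := by
    rw [hTeta, hDdef, hD'def, hUdef, hU'def]
    rw [Matrix.mul_fin_two, Matrix.mul_fin_two, Matrix.mul_fin_two, Matrix.mul_fin_two]

    have hc2 : q⁻¹ * c * q = toH l2 := by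
      rw [mul_assoc, hqc, ← mul_assoc, inv_mul_cancel₀ hq0, one_mul]
    simp only [one_mul, mul_one, zero_mul, mul_zero, add_zero, zero_add, neg_mul]
    rw [hc2]
    have hz : toH l1 * x + (T 0 1 * q + -(x * toH l2)) = 0 := by
      rw [← add_assoc, hx, add_neg_cancel]
    rw [hz]
  -- final assembly
  have hdiag : Matrix.diagonal ![toH l1, toH l2] = !![toH l1, 0; 0, toH l2] := by
    apply Matrix.ext
    intro i j
    fin_cases i <;> fin_cases j <;> simp [Matrix.diagonal]
  refine ⟨S₀ * D * U, U' * D' * R₀, ?_, ?_, ?_⟩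
  · calc S₀ * D * U * (U' * D' * R₀) = S₀ * (D * (U * U') * (D' * R₀)) := by noncomm_ring
    _ = S₀ * (D * (D' * R₀)) := by rw [hUU', mul_one]
    _ = S₀ * ((D * D') * R₀) := by rw [Matrix.mul_assoc]
    _ = 1 := by rw [hDD', Matrix.one_mul, hSR]
  · calc U' * D' * R₀ * (S₀ * D * U) = U' * (D' * (R₀ * S₀) * (D * U)) := by noncomm_ring
    _ = U' * (D' * (D * U)) := by rw [hRS, mul_one]
    _ = U' * ((D' * D) * U) := by rw [Matrix.mul_assoc]
    _ = 1 := by rw [hD'D, Matrix.one_mul, hU'U]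
  · rw [hdiag, ← hT3]
    have hW : D * U * (U' * D') = 1 := by
      calc D * U * (U' * D') = D * (U * U') * D' := by noncomm_ring
      _ = 1 := by rw [hUU', mul_one, hDD']
    calc P = (S₀ * R₀) * P * (S₀ * R₀) := by rw [hSR]; simp
    _ = S₀ * (D * U * (U' * D')) * (R₀ * P * S₀) * (D * U * (U' * D')) * R₀ := by
        rw [hW]; noncomm_ring
    _ = S₀ * D * U * (U' * (D' * (R₀ * P * S₀) * D) * U) * (U' * D' * R₀) := by noncomm_ring
    _ = S₀ * D * U * (U' * (D' * T * D) * U) * (U' * D' * R₀) := by rw [← hTdef]
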